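/- If δ₁ : [0,∞) → [0,∞) satisfies δ₁(t) = δ₁(0) + ∫₀ᵗ λ(1 − p₀(s)) ds − ν∫₀ᵗ δ₁(s) ds with p₀(t) → 1 as t → ∞ and 0 ≤ p₀ ≤ 1, then δ₁(t) → 0 as t → ∞. -/

import Mathlib

open Filter intervalIntegral

/-- If `δ₁ : [0,∞) → [0,∞)` satisfies
`δ₁(t) = δ₁(0) + ∫₀ᵗ λ(1 - p₀(s)) ds - ν ∫₀ᵗ δ₁(s) ds`
with `p₀ : [0,∞) → [0,1]` measurable and `p₀(t) → 1` as `t → ∞`,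
then `δ₁(t) → 0` as `t → ∞`. -/
theorem delta1_tendsto_zero (lam nu : ℝ) (hlam : 0 < lam) (hnu : 0 < nu)
    (δ1 p0 : ℝ → ℝ)
    (hδ1cont : Continuous δ1) (hδ1nonneg : ∀ t, 0 ≤ t → 0 ≤ δ1 t)
    (hδ1bdd : ∃ C, ∀ t, 0 ≤ t → δ1 t ≤ C)
    (hp0meas : Measurable p0) (hp0mem : ∀ t, 0 ≤ t → p0 t ∈ Set.Icc (0:ℝ) 1)
    (hp0lim : Tendsto p0 atTop (nhds 1))
    (heq : ∀ t, 0 ≤ t →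
      δ1 t = δ1 0 + (∫ s in (0:ℝ)..t, lam * (1 - p0 s)) - nu * ∫ s in (0:ℝ)..t, δ1 s) :
    Tendsto δ1 atTop (nhds 0) := by
  obtain ⟨C₀, hC₀⟩ := hδ1bdd
  set C : ℝ := max C₀ 0 with hCdef
  have hC0 : (0:ℝ) ≤ C := le_max_right _ _
  have hC : ∀ t, 0 ≤ t → δ1 t ≤ C := fun t ht => (hC₀ t ht).trans (le_max_left _ _)
  -- clamped input function
  set g : ℝ → ℝ := fun s => lam * (1 - max 0 (min 1 (p0 s))) with hgdef
  have hgmeas : Measurable g := by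
    apply measurable_const.mul
    exact measurable_const.sub (measurable_const.max (measurable_const.min hp0meas))
  have hgbd : ∀ s, ‖g s‖ ≤ lam := by
    intro s
    have h1 : (0:ℝ) ≤ max 0 (min 1 (p0 s)) := le_max_left _ _
    have h2 : max 0 (min 1 (p0 s)) ≤ 1 := max_le zero_le_one (min_le_left _ _)
    have : |1 - max 0 (min 1 (p0 s))| ≤ 1 := abs_le.mpr ⟨by linarith, by linarith⟩
    calc ‖g s‖ = lam * |1 - max 0 (min 1 (p0 s))| := by
          rw [hgdef]; simp [Real.norm_eq_abs, abs_mul, abs_of_pos hlam]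
      _ ≤ lam * 1 := by nlinarith
      _ = lam := mul_one lam
  have hgint : ∀ a b : ℝ, IntervalIntegrable g MeasureTheory.volume a b := by
    intro a b
    exact (_root_.intervalIntegrable_const (c := lam)).mono_fun'
      hgmeas.aestronglyMeasurable.restrict (Filter.Eventually.of_forall hgbd)
  have hgeq : ∀ s, 0 ≤ s → g s = lam * (1 - p0 s) := by
    intro s hs
    obtain ⟨h1, h2⟩ := hp0mem s hs
    rw [hgdef]
    simp [min_eq_right h2, max_eq_right h1]
  have hδint : ∀ a b : ℝ, IntervalIntegrable δ1 MeasureTheory.volume a b :=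
    fun a b => hδ1cont.intervalIntegrable a b
  -- the integral equation with g
  have heqg : ∀ t, 0 ≤ t →
      δ1 t = δ1 0 + (∫ s in (0:ℝ)..t, g s) - nu * ∫ s in (0:ℝ)..t, δ1 s := by
    intro t ht
    rw [heq t ht]
    congr 2
    apply intervalIntegral.integral_congr
    intro s hs
    rw [Set.uIcc_of_le ht] at hs
    exact (hgeq s hs.1).symm
  -- key estimate
  have key : ∀ ε : ℝ, 0 < ε → ∀ T : ℝ, 0 ≤ T → (∀ s, T ≤ s → g s ≤ ε) →
      ∀ t, T ≤ t → δ1 t ≤ ε / nu + C * Real.exp (-nu * (t - T)) := by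
    intro ε hε T hT hgε t htT
    have ht0 : 0 ≤ t := hT.trans htT
    set ψ : ℝ → ℝ := fun u => ε / nu + C * Real.exp (-nu * (u - T)) with hψdef
    have hψcont : Continuous ψ := by
      apply continuous_const.add
      exact continuous_const.mul
        (Real.continuous_exp.comp (continuous_const.mul (continuous_id.sub continuous_const)))
    set d : ℝ → ℝ := fun u => δ1 u - ψ u with hddef
    have hdcont : Continuous d := hδ1cont.sub hψcont
    have hdint : ∀ a b : ℝ, IntervalIntegrable d MeasureTheory.volume a b :=
      fun a b => hdcont.intervalIntegrable a b
    have hψint : ∀ a b : ℝ, IntervalIntegrable ψ MeasureTheory.volume a b :=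
      fun a b => hψcont.intervalIntegrable a b
    set a : ℝ → ℝ := fun u => d T + ∫ s in T..u, (g s - ε) with hadef
    have hacont : Continuous a := by
      apply continuous_const.add
      exact intervalIntegral.continuous_primitive
        (fun x y => (hgint x y).sub intervalIntegrable_const) T
    -- derivative of ψ
    have hψderiv : ∀ x : ℝ, HasDerivAt ψ (ε - nu * ψ x) x := by
      intro x
      have h1 : HasDerivAt (fun y : ℝ => -nu * (y - T)) (-nu) x := by
        simpa using ((hasDerivAt_id x).sub_const T).const_mul (-nu)
      have h2 := ((h1.exp).const_mul C).const_add (ε / nu)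
      refine h2.congr_deriv ?_
      rw [hψdef]
      field_simp
      ring
    have hψFTC : ∀ u : ℝ, ψ u - ψ T = (u - T) * ε - nu * ∫ s in T..u, ψ s := by
      intro u
      have h := intervalIntegral.integral_eq_sub_of_hasDerivAt
        (f := ψ) (f' := fun x => ε - nu * ψ x)
        (fun x _ => hψderiv x)
        (((continuous_const.sub (continuous_const.mul hψcont))).intervalIntegrable T u)
      rw [intervalIntegral.integral_sub intervalIntegrable_const
        ((hψint T u).const_mul nu), intervalIntegral.integral_const,
        intervalIntegral.integral_const_mul] at h
      rw [← h]
      simp only [smul_eq_mul]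
    set D : ℝ → ℝ := fun u => ∫ s in T..u, d s with hDdef
    -- key identity
    have keyA : ∀ u, 0 ≤ u → d u = a u - nu * D u := by
      intro u hu
      have e1 := heqg u hu
      have e2 := heqg T hT
      have i1 : (∫ s in (0:ℝ)..T, g s) + ∫ s in T..u, g s = ∫ s in (0:ℝ)..u, g s :=
        intervalIntegral.integral_add_adjacent_intervals (hgint 0 T) (hgint T u)
      have i2 : (∫ s in (0:ℝ)..T, δ1 s) + ∫ s in T..u, δ1 s = ∫ s in (0:ℝ)..u, δ1 s :=
        intervalIntegral.integral_add_adjacent_intervals (hδint 0 T) (hδint T u)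
      have h1 : δ1 u - δ1 T = (∫ s in T..u, g s) - nu * ∫ s in T..u, δ1 s := by
        rw [e1, e2, ← i1, ← i2]; ring
      have h2 := hψFTC u
      have h3 : a u = d T + ((∫ s in T..u, g s) - (u - T) * ε) := by
        rw [hadef]
        simp only
        rw [intervalIntegral.integral_sub (hgint T u) intervalIntegrable_const,
          intervalIntegral.integral_const]
        simp [smul_eq_mul]
      have h4 : D u = (∫ s in T..u, δ1 s) - ∫ s in T..u, ψ s := by
        rw [hDdef]
        simp only [hddef]
        rw [intervalIntegral.integral_sub (hδint T u) (hψint T u)]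
      rw [hddef]
      simp only
      rw [h3, h4]
      have hdT : d T = δ1 T - ψ T := rfl
      linear_combination h1 - h2 + hdT
    -- integrating factor
    have hDderiv : ∀ u : ℝ, HasDerivAt D (d u) u := by
      intro u
      exact intervalIntegral.integral_hasDerivAt_right (hdint T u)
        (hdcont.stronglyMeasurable.stronglyMeasurableAtFilter) hdcont.continuousAt
    have hexp : ∀ u : ℝ, HasDerivAt (fun x : ℝ => Real.exp (nu * x)) (nu * Real.exp (nu * u)) u := by
      intro u
      have h1 : HasDerivAt (fun y : ℝ => nu * y) nu u := by
        simpa using (hasDerivAt_id u).const_mul nu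
      simpa [mul_comm] using h1.exp
    have hH : ∀ u ∈ Set.uIcc T t, HasDerivAt (fun x => Real.exp (nu * x) * D x)
        (Real.exp (nu * u) * a u) u := by
      intro u hu
      rw [Set.uIcc_of_le htT] at hu
      have hu0 : 0 ≤ u := hT.trans hu.1
      have h2 := (hexp u).mul (hDderiv u)
      refine h2.congr_deriv ?_
      rw [keyA u hu0]
      ring
    have hintcont : Continuous (fun u => Real.exp (nu * u) * a u) :=
      (Real.continuous_exp.comp (continuous_const.mul continuous_id)).mul hacont
    have hInt : Real.exp (nu * t) * D t - Real.exp (nu * T) * D T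
        = ∫ u in T..t, Real.exp (nu * u) * a u :=
      (intervalIntegral.integral_eq_sub_of_hasDerivAt hH
        (hintcont.intervalIntegrable T t)).symm
    have hDT : D T = 0 := intervalIntegral.integral_same
    -- a is "nonincreasing" below a T on [T,t]
    have hamono : ∀ u ∈ Set.Icc T t, a t ≤ a u := by
      intro u hu
      have hadd : (∫ s in T..u, (g s - ε)) + ∫ s in u..t, (g s - ε) = ∫ s in T..t, (g s - ε) :=
        intervalIntegral.integral_add_adjacent_intervals
          ((hgint T u).sub intervalIntegrable_const)
          ((hgint u t).sub intervalIntegrable_const)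
      have hle : (∫ s in u..t, (g s - ε)) ≤ 0 := by
        have h0 : (∫ s in u..t, (0:ℝ)) = 0 := by simp
        rw [← h0]
        apply intervalIntegral.integral_mono_on hu.2
          ((hgint u t).sub intervalIntegrable_const) intervalIntegrable_const
        intro s hs
        have : T ≤ s := hu.1.trans hs.1
        linarith [hgε s this]
      rw [hadef]
      simp only
      linarith
    have haT : a T = d T := by rw [hadef]; simp
    have hdT0 : d T ≤ 0 := by
      have := hC T hT
      rw [hddef, hψdef]
      simp only
      have : Real.exp (-nu * (T - T)) = 1 := by simp
      rw [this]
      have hεν : 0 ≤ ε / nu := le_of_lt (div_pos hε hnu)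
      linarith [hC T hT]
    have hat0 : a t ≤ 0 := by
      have := hamono T ⟨le_refl T, htT⟩
      linarith [haT ▸ this, hdT0]
    -- lower bound on the integral
    have hmono2 : (∫ u in T..t, Real.exp (nu * u) * a t) ≤ ∫ u in T..t, Real.exp (nu * u) * a u := by
      apply intervalIntegral.integral_mono_on htT
        (((Real.continuous_exp.comp (continuous_const.mul continuous_id)).mul
          continuous_const).intervalIntegrable T t)
        (hintcont.intervalIntegrable T t)
      intro u hu
      exact mul_le_mul_of_nonneg_left (hamono u hu) (Real.exp_nonneg _)
    have hexpint : (∫ u in T..t, Real.exp (nu * u))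
        = (Real.exp (nu * t) - Real.exp (nu * T)) / nu := by
      have h : ∀ u ∈ Set.uIcc T t,
          HasDerivAt (fun x => Real.exp (nu * x) / nu) (Real.exp (nu * u)) u := by
        intro u _
        have := (hexp u).div_const nu
        refine this.congr_deriv ?_
        field_simp
      rw [intervalIntegral.integral_eq_sub_of_hasDerivAt h
        ((Real.continuous_exp.comp (continuous_const.mul continuous_id)).intervalIntegrable T t)]
      ring
    have hconst : (∫ u in T..t, Real.exp (nu * u) * a t)
        = a t * ((Real.exp (nu * t) - Real.exp (nu * T)) / nu) := by
      rw [intervalIntegral.integral_mul_const, hexpint]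
      ring
    -- combine
    have hDt : a t * ((Real.exp (nu * t) - Real.exp (nu * T)) / nu)
        ≤ Real.exp (nu * t) * D t := by
      rw [hDT, mul_zero, sub_zero] at hInt
      rw [hconst] at hmono2
      linarith
    have hEt : (0:ℝ) < Real.exp (nu * t) := Real.exp_pos _
    have hET : (0:ℝ) < Real.exp (nu * T) := Real.exp_pos _
    -- final: d t ≤ 0
    have hdt : d t ≤ 0 := by
      have hk := keyA t ht0
      -- nu * D t ≥ a t * (1 - exp(nu T)/exp(nu t)) ≥ a t
      have h1 : a t * (Real.exp (nu * t) - Real.exp (nu * T)) ≤ nu * (Real.exp (nu * t) * D t) := by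
        have := mul_le_mul_of_nonneg_left hDt (le_of_lt hnu)
        calc a t * (Real.exp (nu * t) - Real.exp (nu * T))
            = nu * (a t * ((Real.exp (nu * t) - Real.exp (nu * T)) / nu)) := by
              field_simp
          _ ≤ nu * (Real.exp (nu * t) * D t) := this
      -- so exp(nu t) * (nu * D t) ≥ a t * exp(nu t) - a t * exp(nu T) ≥ a t * exp(nu t)
      have h2 : a t * Real.exp (nu * t) ≤ Real.exp (nu * t) * (nu * D t) := by
        nlinarith [mul_nonpos_of_nonpos_of_nonneg hat0 (le_of_lt hET)]
      have h3 : a t ≤ nu * D t := by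
        have := (mul_le_mul_iff_of_pos_right hEt).mp (by linarith : a t * Real.exp (nu * t) ≤ (nu * D t) * Real.exp (nu * t))
        exact this
      linarith [hk]
    rw [hddef] at hdt
    simp only at hdt
    rw [hψdef] at hdt
    linarith
  -- conclude
  rw [Metric.tendsto_nhds]
  intro ε hε
  have hε2 : (0:ℝ) < nu * ε / 2 := by positivity
  -- eventually g s ≤ nu*ε/2
  have hp0ev : ∀ᶠ s in atTop, 1 - (nu * ε / 2) / lam < p0 s := by
    apply hp0lim.eventually_const_lt
    have : (0:ℝ) < (nu * ε / 2) / lam := by positivity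
    linarith
  have hgev : ∀ᶠ s in atTop, g s ≤ nu * ε / 2 := by
    filter_upwards [hp0ev, eventually_ge_atTop (0:ℝ)] with s hs hs0
    rw [hgeq s hs0]
    have : 1 - p0 s < (nu * ε / 2) / lam := by linarith
    calc lam * (1 - p0 s) ≤ lam * ((nu * ε / 2) / lam) :=
          mul_le_mul_of_nonneg_left (le_of_lt this) (le_of_lt hlam)
      _ = nu * ε / 2 := by field_simp
  obtain ⟨T₀, hT₀⟩ := eventually_atTop.mp hgev
  set T := max T₀ 0 with hTdef
  have hT0 : (0:ℝ) ≤ T := le_max_right _ _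
  have hgT : ∀ s, T ≤ s → g s ≤ nu * ε / 2 := fun s hs =>
    hT₀ s ((le_max_left _ _).trans hs)
  have hkey := key (nu * ε / 2) hε2 T hT0 hgT
  -- the exponential tail tends to 0
  have htail : Tendsto (fun t => C * Real.exp (-nu * (t - T))) atTop (nhds 0) := by
    have h1 : Tendsto (fun t : ℝ => -nu * (t - T)) atTop atBot := by
      apply Tendsto.const_mul_atTop_of_neg (by linarith : -nu < 0)
      exact tendsto_atTop_add_const_right atTop (-T) tendsto_id
    have h2 := Real.tendsto_exp_atBot.comp h1
    simpa using h2.const_mul C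
  have htailev : ∀ᶠ t in atTop, C * Real.exp (-nu * (t - T)) < ε / 4 := by
    apply htail.eventually_lt_const
    positivity
  filter_upwards [htailev, eventually_ge_atTop T] with t ht1 ht2
  have ht0 : (0:ℝ) ≤ t := hT0.trans ht2
  have hb := hkey t ht2
  have hnn := hδ1nonneg t ht0
  rw [Real.dist_eq, sub_zero, abs_of_nonneg hnn]
  have : nu * ε / 2 / nu = ε / 2 := by field_simp
  rw [this] at hb
  linarith
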